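/- Let f₁, …, f_n be partially defined continuous real-valued functions of one real variable such that any two of them intersect (in their graphs) at most once, and each f_i is defined on an interval D_i of the same length d > 0. If the union of all the D_i has total measure c·d for some constant c, then the lower envelope of {f₁, …, f_n} has O(n) breakpoints; more precisely, the number of breakpoints is at most a constant (depending only on c) times n. -/

import Mathlib

open Set

namespace LEnvAux

/-- separation counting: if between any two points of `P` there is a point of `Q`,
then `|P| ≤ |Q| + 1`. -/
lemma sep_count (P Q : Set ℝ) (hP : P.Finite) (hQ : Q.Finite)
    (hsep : ∀ x ∈ P, ∀ y ∈ P, x < y → (Q ∩ Ioo x y).Nonempty) :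
    P.ncard ≤ Q.ncard + 1 := by
  classical
  set P' := {x ∈ P | ∃ y ∈ P, x < y} with hP'def
  have hP'sub : P' ⊆ P := fun x hx => hx.1
  have hP'fin : P'.Finite := hP.subset hP'sub
  -- the "next" element
  have hnext : ∀ x ∈ P', (P ∩ Ioi x).Nonempty := by
    rintro x ⟨hxP, y, hyP, hxy⟩; exact ⟨y, hyP, hxy⟩
  have hnext_mem : ∀ x ∈ P', sInf (P ∩ Ioi x) ∈ P ∩ Ioi x := by
    intro x hx; exact (hnext x hx).csInf_mem (hP.inter_of_left _)
  have hnext_le : ∀ x ∈ P', ∀ y ∈ P, x < y → sInf (P ∩ Ioi x) ≤ y := by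
    intro x hx y hy hxy
    exact csInf_le (hP.inter_of_left _).bddBelow ⟨hy, hxy⟩
  have hz : ∀ x ∈ P', (Q ∩ Ioo x (sInf (P ∩ Ioi x))).Nonempty := by
    intro x hx
    exact hsep x (hP'sub hx) _ (hnext_mem x hx).1 (hnext_mem x hx).2
  choose! z hzQ hzI using fun x hx => (hz x hx)
  have hinj : Set.InjOn z P' := by
    intro x hx y hy hxy
    by_contra hne
    rcases lt_or_gt_of_ne hne with h | h
    · have h1 : z x < sInf (P ∩ Ioi x) := (hzI x hx).2
      have h2 : sInf (P ∩ Ioi x) ≤ y := hnext_le x hx y (hP'sub hy) h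
      have h3 : y < z y := (hzI y hy).1
      rw [hxy] at h1; linarith
    · have h1 : z y < sInf (P ∩ Ioi y) := (hzI y hy).2
      have h2 : sInf (P ∩ Ioi y) ≤ x := hnext_le y hy x (hP'sub hx) h
      have h3 : x < z x := (hzI x hx).1
      rw [← hxy] at h1; linarith
  have h1 : P'.ncard ≤ Q.ncard :=
    Set.ncard_le_ncard_of_injOn z (fun x hx => hzQ x hx) hinj hQ
  have h2 : (P \ P').Subsingleton := by
    intro x hx y hy
    by_contra hne
    rcases lt_or_gt_of_ne hne with h | h
    · exact hx.2 ⟨hx.1, y, hy.1, h⟩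
    · exact hy.2 ⟨hy.1, x, hx.1, h⟩
  calc P.ncard = (P' ∪ (P \ P')).ncard := by rw [Set.union_diff_cancel hP'sub]
    _ ≤ P'.ncard + (P \ P').ncard := Set.ncard_union_le _ _
    _ ≤ Q.ncard + 1 := by
        have h3 : (P \ P').ncard ≤ 1 := by
          rw [Set.ncard_le_one hP.diff]
          exact fun a ha b hb => h2 ha hb
        omega

/-- ncard of a biUnion over a finset is at most the sum. -/
lemma ncard_biUnion_le {ι : Type*} (s : Finset ι) (t : ι → Set ℝ)
    (ht : ∀ i ∈ s, (t i).Finite) :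
    (⋃ i ∈ s, t i).ncard ≤ ∑ i ∈ s, (t i).ncard := by
  classical
  induction s using Finset.induction_on with
  | empty => simp
  | insert a s' hni ih =>
    rw [Finset.set_biUnion_insert, Finset.sum_insert hni]
    calc (t a ∪ ⋃ i ∈ s', t i).ncard ≤ (t a).ncard + (⋃ i ∈ s', t i).ncard :=
          Set.ncard_union_le _ _
      _ ≤ (t a).ncard + ∑ i ∈ s', (t i).ncard := by
          have := ih (fun i hi => ht i (Finset.mem_insert_of_mem hi))
          omega

end LEnvAux

namespace LEnvAux2
open LEnvAux Filter Topology

/-- If `i₁` attains the minimum of the finite family `g k` (`k ∈ G`) at `x`, all `g k`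
continuous on `[x,y]`, and at no point of `[x,y)` does another function tie with `i₁`
while `i₁` is minimal, then `i₁` still attains the minimum at `y`. -/
lemma stay_min {ι : Type*} (G : Finset ι) (g : ι → ℝ → ℝ) (x y : ℝ) (hxy : x ≤ y)
    (hc : ∀ k ∈ G, ContinuousOn (g k) (Icc x y)) (i₁ : ι) (hi₁ : i₁ ∈ G)
    (hx : ∀ k ∈ G, g i₁ x ≤ g k x)
    (hnt : ∀ z ∈ Ico x y, ∀ k ∈ G, k ≠ i₁ → g i₁ z = g k z →
      (∀ k' ∈ G, g i₁ z ≤ g k' z) → False) :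
    ∀ k ∈ G, g i₁ y ≤ g k y := by
  classical
  set W : Set ℝ := Icc x y ∩ ⋂ k ∈ G, (Icc x y ∩ (fun z => g i₁ z - g k z) ⁻¹' Iic 0)
    with hWdef
  have hWmem : ∀ z, z ∈ W ↔ (z ∈ Icc x y ∧ ∀ k ∈ G, g i₁ z ≤ g k z) := by
    intro z
    simp only [hWdef, Set.mem_inter_iff, Set.mem_iInter, Set.mem_preimage, Set.mem_Iic]
    constructor
    · rintro ⟨hz, h⟩
      exact ⟨hz, fun k hk => by have := h k hk; linarith [this.2]⟩
    · rintro ⟨hz, h⟩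
      exact ⟨hz, fun k hk => ⟨hz, by linarith [h k hk]⟩⟩
  have hWclosed : IsClosed W := by
    apply IsClosed.inter isClosed_Icc
    apply isClosed_biInter
    intro k hk
    exact ContinuousOn.preimage_isClosed_of_isClosed
      (((hc i₁ hi₁).sub (hc k hk))) isClosed_Icc isClosed_Iic
  have hxW : x ∈ W := (hWmem x).2 ⟨left_mem_Icc.2 hxy, hx⟩
  have hWne : W.Nonempty := ⟨x, hxW⟩
  have hWbdd : BddAbove W := ⟨y, fun z hz => ((hWmem z).1 hz).1.2⟩
  set s := sSup W with hs
  have hsW : s ∈ W := hWclosed.csSup_mem hWne hWbdd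
  have hsIcc : s ∈ Icc x y := ((hWmem s).1 hsW).1
  have hsmin : ∀ k ∈ G, g i₁ s ≤ g k s := ((hWmem s).1 hsW).2
  rcases eq_or_lt_of_le hsIcc.2 with hsy | hsy
  · intro k hk; rw [← hsy]; exact hsmin k hk
  -- s < y : derive a contradiction
  exfalso
  have hstrict : ∀ k ∈ G, k ≠ i₁ → g i₁ s < g k s := by
    intro k hk hkne
    rcases lt_or_eq_of_le (hsmin k hk) with h | h
    · exact h
    · exact absurd (hnt s ⟨hsIcc.1, hsy⟩ k hk hkne h hsmin) (fun h => h)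
  set L := 𝓝[Icc x y] s with hL
  have hev : ∀ᶠ z in L, ∀ k ∈ G, (k ≠ i₁ → g i₁ z < g k z) := by
    rw [Finset.eventually_all]
    intro k hk
    by_cases hkne : k = i₁
    · exact Filter.Eventually.of_forall (fun z h => absurd hkne h)
    · have htend : ContinuousWithinAt (fun z => g i₁ z - g k z) (Icc x y) s :=
        ((hc i₁ hi₁).continuousWithinAt hsIcc).sub ((hc k hk).continuousWithinAt hsIcc)
      have hlt : g i₁ s - g k s < 0 := by linarith [hstrict k hk hkne]
      have := htend.eventually_lt_const (by linarith : g i₁ s - g k s < 0)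
      exact this.mono (fun z hz hne => by linarith)
  have hL' : 𝓝[Ioc s y] s ≤ L := nhdsWithin_mono s (fun z hz => ⟨hsIcc.1.trans hz.1.le, hz.2⟩)
  have hNB : (𝓝[Ioc s y] s).NeBot := left_nhdsWithin_Ioc_neBot hsy
  have hev2 : ∀ᶠ z in 𝓝[Ioc s y] s, (∀ k ∈ G, (k ≠ i₁ → g i₁ z < g k z)) ∧ z ∈ Ioc s y :=
    (hev.filter_mono hL').and self_mem_nhdsWithin
  rcases hev2.exists with ⟨z, hz1, hz2⟩
  have hzW : z ∈ W := by
    rw [hWmem]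
    refine ⟨⟨hsIcc.1.trans hz2.1.le, hz2.2⟩, fun k hk => ?_⟩
    by_cases hkk : k = i₁
    · rw [hkk]
    · exact (hz1 k hk hkk).le
  exact absurd (le_csSup hWbdd hzW) (not_le.2 hz2.1)

end LEnvAux2

namespace LEnvRays

variable {ι : Type*}

/-- domain of the `i`-th ray: `[L i, q]`. -/
def Dm (L : ι → ℝ) (q : ℝ) (i : ι) : Set ℝ := Icc (L i) q

/-- points of the domain of `i` where `i` attains the pointwise minimum. -/
def Mset (F : Finset ι) (L : ι → ℝ) (q : ℝ) (f : ι → ℝ → ℝ) (i : ι) : Set ℝ :=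
  {x | x ∈ Dm L q i ∧ ∀ k ∈ F, x ∈ Dm L q k → f i x ≤ f k x}

/-- points where at least two of the rays attain the pointwise minimum. -/
def Sray (F : Finset ι) (L : ι → ℝ) (q : ℝ) (f : ι → ℝ → ℝ) : Set ℝ :=
  {x | ∃ i ∈ F, ∃ j ∈ F, i ≠ j ∧ x ∈ Mset F L q f i ∧ x ∈ Mset F L q f j}

lemma mem_Mset {F : Finset ι} {L : ι → ℝ} {q : ℝ} {f : ι → ℝ → ℝ} {i : ι} {x : ℝ} :
    x ∈ Mset F L q f i ↔ x ∈ Dm L q i ∧ ∀ k ∈ F, x ∈ Dm L q k → f i x ≤ f k x := Iff.rfl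


lemma ncard_biUnion_le' {κ : Type*} (s : Finset κ) (t : κ → Set ℝ)
    (ht : ∀ i ∈ s, (t i).Finite) :
    (⋃ i ∈ s, t i).ncard ≤ ∑ i ∈ s, (t i).ncard := by
  classical
  induction s using Finset.induction_on with
  | empty => simp
  | insert a s' hni ih =>
    rw [Finset.set_biUnion_insert, Finset.sum_insert hni]
    calc (t a ∪ ⋃ i ∈ s', t i).ncard ≤ (t a).ncard + (⋃ i ∈ s', t i).ncard :=
          Set.ncard_union_le _ _
      _ ≤ (t a).ncard + ∑ i ∈ s', (t i).ncard := by
          have := ih (fun i hi => ht i (Finset.mem_insert_of_mem hi))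
          omega

theorem sray_card [DecidableEq ι] (F : Finset ι) (L : ι → ℝ) (q : ℝ) (f : ι → ℝ → ℝ)
    (hcont : ∀ i ∈ F, ContinuousOn (f i) (Dm L q i))
    (hpair : ∀ i ∈ F, ∀ j ∈ F, i ≠ j →
      {x | x ∈ Dm L q i ∩ Dm L q j ∧ f i x = f j x}.Subsingleton) :
    (Sray F L q f).Finite ∧ (Sray F L q f).ncard ≤ 4 * F.card := by
  classical
  -- two functions both attaining the minimum at `x` are equal at `x`
  have heq : ∀ i ∈ F, ∀ j ∈ F, ∀ x, x ∈ Mset F L q f i → x ∈ Mset F L q f j →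
      f i x = f j x := by
    intro i hi j hj x hxi hxj
    exact le_antisymm (hxi.2 j hj hxj.1) (hxj.2 i hi hxi.1)
  -- finiteness of Sray
  have hfin : (Sray F L q f).Finite := by
    have hsub : Sray F L q f ⊆ ⋃ i ∈ F, ⋃ j ∈ F.erase i,
        {x | x ∈ Dm L q i ∩ Dm L q j ∧ f i x = f j x} := by
      rintro x ⟨i, hi, j, hj, hij, hxi, hxj⟩
      refine Set.mem_biUnion hi (Set.mem_biUnion (Finset.mem_erase.2 ⟨hij.symm, hj⟩) ?_)
      exact ⟨⟨hxi.1, hxj.1⟩, heq i hi j hj x hxi hxj⟩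
    refine Set.Finite.subset ?_ hsub
    refine Set.Finite.biUnion F.finite_toSet (fun i hi => ?_)
    refine Set.Finite.biUnion (F.erase i).finite_toSet (fun j hj => ?_)
    exact Set.Subsingleton.finite (hpair i hi j (Finset.mem_of_mem_erase hj)
      (fun h => (Finset.mem_erase.1 hj).1 h.symm))
  -- two intersection points of a pair coincide
  have tworoot : ∀ i ∈ F, ∀ j ∈ F, i ≠ j → ∀ x y,
      x ∈ Dm L q i → x ∈ Dm L q j → y ∈ Dm L q i → y ∈ Dm L q j →
      f i x = f j x → f i y = f j y → x = y := by
    intro i hi j hj hij x y h1 h2 h3 h4 h5 h6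
    exact hpair i hi j hj hij ⟨⟨h1, h2⟩, h5⟩ ⟨⟨h3, h4⟩, h6⟩
  -- intermediate value
  have hroot : ∀ i ∈ F, ∀ j ∈ F, ∀ α β, α ≤ β →
      Icc α β ⊆ Dm L q i → Icc α β ⊆ Dm L q j →
      f i α ≤ f j α → f j β ≤ f i β → ∃ r ∈ Icc α β, f i r = f j r := by
    intro i hi j hj α β hab hsub1 hsub2 h1 h2
    have hg : ContinuousOn (fun z => f j z - f i z) (Icc α β) :=
      (((hcont j hj).mono hsub2).sub ((hcont i hi).mono hsub1))
    have h0 : (0:ℝ) ∈ Icc (f j β - f i β) (f j α - f i α) := ⟨by linarith, by linarith⟩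
    obtain ⟨r, hr, hre⟩ := intermediate_value_Icc' hab hg h0
    exact ⟨r, hr, by dsimp at hre; linarith⟩
  -- interloper lemma: a function dipping below i inside a "min-gap" of i is born inside
  have hinter : ∀ i ∈ F, ∀ x x', x ∈ Mset F L q f i → x' ∈ Mset F L q f i → x < x' →
      ∀ y, x < y → y < x' → ∀ j ∈ F, y ∈ Dm L q j → f j y < f i y →
      x < L j ∧ L j ≤ y := by
    intro i hi x x' hxM hx'M hxx' y hxy hyx' j hj hyDj hlt
    have hLjy : L j ≤ y := hyDj.1
    have hij : i ≠ j := by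
      rintro rfl; exact absurd rfl (ne_of_gt hlt)
    refine ⟨?_, hLjy⟩
    by_contra hcon
    push_neg at hcon   -- L j ≤ x
    have hxq : x ≤ q := hxM.1.2
    have hx'q : x' ≤ q := hx'M.1.2
    have hsubi : Icc x x' ⊆ Dm L q i := fun z hz => ⟨hxM.1.1.trans hz.1, hz.2.trans hx'q⟩
    have hsub1i : Icc x y ⊆ Dm L q i := fun z hz => hsubi ⟨hz.1, hz.2.trans hyx'.le⟩
    have hsub1j : Icc x y ⊆ Dm L q j :=
      fun z hz => ⟨hcon.trans hz.1, hz.2.trans (hyx'.le.trans hx'q)⟩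
    have hxDj : x ∈ Dm L q j := hsub1j ⟨le_rfl, hxy.le⟩
    have hyDi : y ∈ Dm L q i := hsub1i ⟨hxy.le, le_rfl⟩
    obtain ⟨r₁, hr₁, hr₁e⟩ := hroot i hi j hj x y hxy.le hsub1i hsub1j
      (hxM.2 j hj hxDj) hlt.le
    have hr₁y : r₁ < y := by
      rcases lt_or_eq_of_le hr₁.2 with h | h
      · exact h
      · exfalso; rw [h] at hr₁e; linarith
    have hsub2i : Icc y x' ⊆ Dm L q i := fun z hz => hsubi ⟨hxy.le.trans hz.1, hz.2⟩
    have hsub2j : Icc y x' ⊆ Dm L q j := fun z hz => ⟨hLjy.trans hz.1, hz.2.trans hx'q⟩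
    have hx'Dj : x' ∈ Dm L q j := hsub2j ⟨hyx'.le, le_rfl⟩
    obtain ⟨r₂, hr₂, hr₂e⟩ := hroot j hj i hi y x' hyx'.le hsub2j hsub2i
      hlt.le (hx'M.2 j hj hx'Dj)
    have hr₂y : y < r₂ := by
      rcases lt_or_eq_of_le hr₂.1 with h | h
      · exact h
      · exfalso; rw [← h] at hr₂e; linarith
    have : r₁ = r₂ := tworoot i hi j hj hij r₁ r₂ (hsub1i hr₁) (hsub1j hr₁)
      (hsub2i hr₂) (hsub2j hr₂) hr₁e hr₂e.symm
    linarith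
  -- two common minimum points of a pair coincide
  have hM2 : ∀ i ∈ F, ∀ j ∈ F, i ≠ j → ∀ x, x ∈ Mset F L q f i → x ∈ Mset F L q f j →
      ∀ y, y ∈ Mset F L q f i → y ∈ Mset F L q f j → x = y := by
    intro i hi j hj hij x hxi hxj y hyi hyj
    exact tworoot i hi j hj hij x y hxi.1 hxj.1 hyi.1 hyj.1
      (heq i hi j hj x hxi hxj) (heq i hi j hj y hyi hyj)
  -- the set of breakpoints lying on `i`'s minimum set
  set U : ι → Set ℝ := fun i => Sray F L q f ∩ Mset F L q f i with hUdef
  have hUfin : ∀ i, (U i).Finite := fun i => hfin.inter_of_left _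
  -- non-interior points
  set T : ι → Set ℝ := fun i =>
    U i ∩ {x | ¬ ∃ x₁ x₂, x₁ < x ∧ x < x₂ ∧ Icc x₁ x₂ ⊆ Mset F L q f i} with hTdef
  have hTfin : ∀ i, (T i).Finite := fun i => (hUfin i).inter_of_left _
  -- every breakpoint is a non-interior point of some attainer
  have hcover : Sray F L q f ⊆ ⋃ i ∈ F, T i := by
    intro x hx
    obtain ⟨i, hi, j, hj, hij, hxi, hxj⟩ := hx
    have hxS : x ∈ Sray F L q f := ⟨i, hi, j, hj, hij, hxi, hxj⟩
    by_cases hni : ∃ x₁ x₂, x₁ < x ∧ x < x₂ ∧ Icc x₁ x₂ ⊆ Mset F L q f i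
    · by_cases hnj : ∃ x₁ x₂, x₁ < x ∧ x < x₂ ∧ Icc x₁ x₂ ⊆ Mset F L q f j
      · exfalso
        obtain ⟨x₁, x₂, hx₁, hx₂, hsub₁⟩ := hni
        obtain ⟨y₁, y₂, hy₁, hy₂, hsub₂⟩ := hnj
        set z := min x₂ y₂ with hz
        have hxz : x < z := lt_min hx₂ hy₂
        have hzi : z ∈ Mset F L q f i := hsub₁ ⟨hx₁.le.trans hxz.le, min_le_left _ _⟩
        have hzj : z ∈ Mset F L q f j := hsub₂ ⟨hy₁.le.trans hxz.le, min_le_right _ _⟩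
        exact absurd (hM2 i hi j hj hij x hxi hxj z hzi hzj) (ne_of_lt hxz)
      · exact Set.mem_biUnion hj ⟨⟨hxS, hxj⟩, hnj⟩
    · exact Set.mem_biUnion hi ⟨⟨hxS, hxi⟩, hni⟩
  -- next point of U i above x
  set nxt : ι → ℝ → ℝ := fun i x => sInf (U i ∩ Ioi x) with hnxtdef
  -- gaps with no minimum in between ("non-solid" gaps), recorded by left endpoint
  set NSL : ι → Set ℝ := fun i =>
    {x | x ∈ U i ∧ (U i ∩ Ioi x).Nonempty ∧ ¬ (Icc x (nxt i x) ⊆ Mset F L q f i)}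
    with hNSLdef
  have hNSLfin : ∀ i, (NSL i).Finite := fun i => (hUfin i).subset (fun x hx => hx.1)
  have hnxt_mem : ∀ i x, x ∈ U i → (U i ∩ Ioi x).Nonempty → nxt i x ∈ U i ∩ Ioi x :=
    fun i x _ hne => hne.csInf_mem ((hUfin i).inter_of_left _)
  have hnxt_le : ∀ i x, ∀ z ∈ U i, x < z → nxt i x ≤ z :=
    fun i x z hz hxz => csInf_le ((hUfin i).inter_of_left _).bddBelow ⟨hz, hxz⟩
  have hgap_empty : ∀ i x, x ∈ U i → ∀ z ∈ U i, ¬ (x < z ∧ z < nxt i x) := by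
    rintro i x hx z hz ⟨h1, h2⟩
    exact absurd (hnxt_le i x z hz h1) (not_le.2 h2)
  -- births inside a gap
  set Bset : ι → ℝ → Set ℝ := fun i x =>
    {b | (∃ k ∈ F, L k = b) ∧ b ∈ Ioo x (nxt i x)} with hBdef
  have hBfin : ∀ i x, (Bset i x).Finite :=
    fun i x => (F.finite_toSet.image L).subset
      (by rintro b ⟨⟨k, hk, rfl⟩, _⟩; exact Set.mem_image_of_mem L hk)
  have hBne : ∀ i ∈ F, ∀ x ∈ NSL i, (Bset i x).Nonempty := by
    intro i hi x hx
    obtain ⟨hxU, hne, hnsolid⟩ := hx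
    obtain ⟨y, hyIcc, hyn⟩ := not_subset.1 hnsolid
    have hxM : x ∈ Mset F L q f i := hxU.2
    have hnM : nxt i x ∈ Mset F L q f i := (hnxt_mem i x hxU hne).1.2
    have hlt : x < nxt i x := (hnxt_mem i x hxU hne).2
    have hy1 : x < y := by
      rcases lt_or_eq_of_le hyIcc.1 with h | h
      · exact h
      · exact absurd (h ▸ hxM) hyn
    have hy2 : y < nxt i x := by
      rcases lt_or_eq_of_le hyIcc.2 with h | h
      · exact h
      · exact absurd (h ▸ hnM) hyn
    have hyD : y ∈ Dm L q i := ⟨hxM.1.1.trans hyIcc.1, hyIcc.2.trans hnM.1.2⟩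
    have : ∃ k ∈ F, y ∈ Dm L q k ∧ f k y < f i y := by
      by_contra hcon
      push_neg at hcon
      exact hyn ⟨hyD, fun k hk hkD => hcon k hk hkD⟩
    obtain ⟨k, hk, hkD, hklt⟩ := this
    obtain ⟨hb1, hb2⟩ := hinter i hi x (nxt i x) hxM hnM hlt y hy1 hy2 k hk hkD hklt
    exact ⟨L k, ⟨k, hk, rfl⟩, hb1, lt_of_le_of_lt hb2 hy2⟩
  -- the chosen (smallest) birth of a gap
  set ev : ι → ℝ → ℝ := fun i x => sInf (Bset i x) with hevdef
  have hev_mem : ∀ i ∈ F, ∀ x ∈ NSL i, ev i x ∈ Bset i x :=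
    fun i hi x hx => (hBne i hi x hx).csInf_mem (hBfin i x)
  have hev_le : ∀ i x, ∀ b ∈ Bset i x, ev i x ≤ b :=
    fun i x b hb => csInf_le (hBfin i x).bddBelow hb
  -- auxiliary: two distinct owners cannot share a gap with the same left endpoint
  -- unless the gaps coincide; here: same left endpoint, strictly smaller right end for j
  have aux2 : ∀ i ∈ F, ∀ j ∈ F, i ≠ j → ∀ x ∈ NSL i, ∀ x' ∈ NSL j, x = x' →
      nxt j x' < nxt i x → False := by
    intro i hi j hj hij x hx x' hx' hxe hlt
    obtain ⟨hxU, hne, _⟩ := hx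
    obtain ⟨hx'U, hne', _⟩ := hx'
    have hxM : x ∈ Mset F L q f i := hxU.2
    have hnM : nxt i x ∈ Mset F L q f i := (hnxt_mem i x hxU hne).1.2
    have hltx : x < nxt i x := (hnxt_mem i x hxU hne).2
    have hs2 : nxt j x' ∈ U j := (hnxt_mem j x' hx'U hne').1
    have hs2gt : x < nxt j x' := hxe ▸ (hnxt_mem j x' hx'U hne').2
    have hs2D : nxt j x' ∈ Dm L q i :=
      ⟨hxM.1.1.trans hs2gt.le, hlt.le.trans hnM.1.2⟩
    have hs2nM : nxt j x' ∉ Mset F L q f i := by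
      intro hM
      exact hgap_empty i x hxU (nxt j x') ⟨hs2.1, hM⟩ ⟨hs2gt, hlt⟩
    have hle : f j (nxt j x') ≤ f i (nxt j x') := hs2.2.2 i hi hs2D
    have hstrict : f j (nxt j x') < f i (nxt j x') := by
      rcases lt_or_eq_of_le hle with h | h
      · exact h
      · exact absurd ⟨hs2D, fun k hk hkD => h ▸ hs2.2.2 k hk hkD⟩ hs2nM
    obtain ⟨hb1, _⟩ := hinter i hi x (nxt i x) hxM hnM hltx (nxt j x')
      hs2gt hlt j hj hs2.2.1 hstrict
    have : L j ≤ x' := hx'U.2.1.1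
    rw [← hxe] at this
    linarith
  -- main ordered auxiliary for distinct owners
  have auxmain : ∀ i ∈ F, ∀ j ∈ F, i ≠ j → ∀ x ∈ NSL i, ∀ x' ∈ NSL j, x ≤ x' →
      ev i x = ev j x' → False := by
    intro i hi j hj hij x hx x' hx' hxle heve
    obtain ⟨hxU, hne, hnsA⟩ := hx
    obtain ⟨hx'U, hne', hnsB⟩ := hx'
    have hx : x ∈ NSL i := ⟨hxU, hne, hnsA⟩
    have hx' : x' ∈ NSL j := ⟨hx'U, hne', hnsB⟩
    have he1 : ev i x ∈ Ioo x (nxt i x) := (hev_mem i hi x hx).2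
    have he2 : ev j x' ∈ Ioo x' (nxt j x') := (hev_mem j hj x' hx').2
    rcases lt_or_eq_of_le hxle with hxlt | hxeq
    · -- x < x' : x' lies strictly inside the gap of i
      have hx'lt : x' < nxt i x := lt_trans (heve ▸ he2.1) he1.2
      have hxM : x ∈ Mset F L q f i := hxU.2
      have hnM : nxt i x ∈ Mset F L q f i := (hnxt_mem i x hxU hne).1.2
      have hx'D : x' ∈ Dm L q i := ⟨hxM.1.1.trans hxlt.le, hx'lt.le.trans hnM.1.2⟩
      have hx'nM : x' ∉ Mset F L q f i := by
        intro hM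
        exact hgap_empty i x hxU x' ⟨hx'U.1, hM⟩ ⟨hxlt, hx'lt⟩
      have hle : f j x' ≤ f i x' := hx'U.2.2 i hi hx'D
      have hstrict : f j x' < f i x' := by
        rcases lt_or_eq_of_le hle with h | h
        · exact h
        · exact absurd ⟨hx'D, fun k hk hkD => h ▸ hx'U.2.2 k hk hkD⟩ hx'nM
      obtain ⟨hb1, hb2⟩ := hinter i hi x (nxt i x) hxM hnM
        ((hnxt_mem i x hxU hne).2) x' hxlt hx'lt j hj hx'U.2.1 hstrict
      -- L j is a birth in the gap of i, smaller than ev i x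
      have hbirth : L j ∈ Bset i x := ⟨⟨j, hj, rfl⟩, hb1, lt_of_le_of_lt hb2 hx'lt⟩
      have := hev_le i x (L j) hbirth
      have hLje : L j < ev i x := by
        calc L j ≤ x' := hb2
          _ < ev j x' := he2.1
          _ = ev i x := heve.symm
      linarith
    · -- x = x'
      rcases lt_trichotomy (nxt j x') (nxt i x) with h | h | h
      · exact aux2 i hi j hj hij x hx x' hx' hxeq h
      · -- equal gaps: the pair i,j has two common minimum points
        have h1 : x ∈ Mset F L q f j := hxeq ▸ hx'U.2
        have h2 : nxt i x ∈ Mset F L q f j := by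
          have := (hnxt_mem j x' hx'U hne').1.2
          rwa [h] at this
        have := hM2 i hi j hj hij x hxU.2 h1 (nxt i x) (hnxt_mem i x hxU hne).1.2 h2
        exact absurd this (ne_of_lt (hnxt_mem i x hxU hne).2)
      · exact aux2 j hj i hi hij.symm x' hx' x hx hxeq.symm h
  -- full injectivity of the chosen birth over all gaps
  have hinj : ∀ i ∈ F, ∀ x ∈ NSL i, ∀ j ∈ F, ∀ x' ∈ NSL j,
      ev i x = ev j x' → i = j ∧ x = x' := by
    intro i hi x hx j hj x' hx' heve
    by_cases hij : i = j
    · subst hij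
      refine ⟨rfl, ?_⟩
      by_contra hne
      rcases lt_or_gt_of_ne hne with hlt | hlt
      · have h1 : nxt i x ≤ x' := hnxt_le i x x' hx'.1 hlt
        have he1 : ev i x ∈ Ioo x (nxt i x) := (hev_mem i hi x hx).2
        have he2 : ev i x' ∈ Ioo x' (nxt i x') := (hev_mem i hi x' hx').2
        rw [heve] at he1
        have := he1.2
        have := he2.1
        linarith
      · have h1 : nxt i x' ≤ x := hnxt_le i x' x hx.1 hlt
        have he1 : ev i x ∈ Ioo x (nxt i x) := (hev_mem i hi x hx).2
        have he2 : ev i x' ∈ Ioo x' (nxt i x') := (hev_mem i hi x' hx').2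
        rw [heve] at he1
        have := he1.1
        have := he2.2
        linarith
    · exfalso
      rcases le_total x x' with hle | hle
      · exact auxmain i hi j hj hij x hx x' hx' hle heve
      · exact auxmain j hj i hi (Ne.symm hij) x' hx' x hx hle heve.symm
  -- previous point of U i below x
  set prv : ι → ℝ → ℝ := fun i x => sSup (U i ∩ Iio x) with hprvdef
  set PC : ι → Set ℝ := fun i =>
    {x | x ∈ U i ∧ (U i ∩ Iio x).Nonempty ∧ prv i x ∈ NSL i ∧ nxt i (prv i x) = x}
    with hPCdef
  have hPCfin : ∀ i, (PC i).Finite := fun i => (hUfin i).subset (fun x hx => hx.1)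
  -- counting the non-interior points of each i
  have hTcount : ∀ i ∈ F, (T i).ncard ≤ 2 + 2 * (NSL i).ncard := by
    intro i hi
    have hcov : T i ⊆ ({sInf (U i)} : Set ℝ) ∪ {sSup (U i)} ∪ NSL i ∪ PC i := by
      intro x hx
      obtain ⟨hxU, hni⟩ := hx
      by_cases h1 : x = sInf (U i)
      · exact Or.inl (Or.inl (Or.inl h1))
      by_cases h2 : x = sSup (U i)
      · exact Or.inl (Or.inl (Or.inr h2))
      have hUne : (U i).Nonempty := ⟨x, hxU⟩
      have hlow : (U i ∩ Iio x).Nonempty := by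
        refine ⟨sInf (U i), ⟨hUne.csInf_mem (hUfin i), ?_⟩⟩
        rcases lt_or_eq_of_le (csInf_le (hUfin i).bddBelow hxU) with h | h
        · exact h
        · exact absurd h.symm h1
      have hhigh : (U i ∩ Ioi x).Nonempty := by
        refine ⟨sSup (U i), ⟨hUne.csSup_mem (hUfin i), ?_⟩⟩
        rcases lt_or_eq_of_le (le_csSup (hUfin i).bddAbove hxU) with h | h
        · exact h
        · exact absurd h h2
      have hPmem : prv i x ∈ U i ∩ Iio x := hlow.csSup_mem ((hUfin i).inter_of_left _)
      have hPnext : nxt i (prv i x) = x := by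
        apply le_antisymm
        · exact csInf_le ((hUfin i).inter_of_left _).bddBelow ⟨hxU, hPmem.2⟩
        · have hxne : (U i ∩ Ioi (prv i x)).Nonempty := ⟨x, ⟨hxU, hPmem.2⟩⟩
          refine le_csInf hxne ?_
          rintro z ⟨hzU, hzP⟩
          by_contra hzx
          push_neg at hzx
          have : z ≤ prv i x := le_csSup ((hUfin i).inter_of_left _).bddAbove ⟨hzU, hzx⟩
          exact absurd hzP (not_lt.2 this)
      by_cases hsolid1 : Icc (prv i x) x ⊆ Mset F L q f i
      · by_cases hsolid2 : Icc x (nxt i x) ⊆ Mset F L q f i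
        · exfalso
          apply hni
          refine ⟨prv i x, nxt i x, hPmem.2, (hnxt_mem i x hxU hhigh).2, ?_⟩
          intro z hz
          rcases le_total z x with h | h
          · exact hsolid1 ⟨hz.1, h⟩
          · exact hsolid2 ⟨h, hz.2⟩
        · exact Or.inl (Or.inr ⟨hxU, hhigh, hsolid2⟩)
      · refine Or.inr ⟨hxU, hlow, ⟨hPmem.1, ⟨x, ⟨hxU, hPmem.2⟩⟩, ?_⟩, hPnext⟩
        rw [hPnext]
        exact hsolid1
    have hPCinj : (PC i).ncard ≤ (NSL i).ncard := by
      apply Set.ncard_le_ncard_of_injOn (prv i) (fun x hx => hx.2.2.1) ?_ (hNSLfin i)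
      intro x hx y hy hxy
      have := hx.2.2.2
      rw [hxy] at this
      rw [← this, hy.2.2.2]
    calc (T i).ncard ≤ (({sInf (U i)} : Set ℝ) ∪ {sSup (U i)} ∪ NSL i ∪ PC i).ncard :=
          Set.ncard_le_ncard hcov
            ((((Set.finite_singleton _).union (Set.finite_singleton _)).union
              (hNSLfin i)).union (hPCfin i))
      _ ≤ (({sInf (U i)} : Set ℝ) ∪ {sSup (U i)} ∪ NSL i).ncard + (PC i).ncard :=
          Set.ncard_union_le _ _
      _ ≤ (({sInf (U i)} : Set ℝ) ∪ {sSup (U i)}).ncard + (NSL i).ncard + (PC i).ncard :=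
          by have := Set.ncard_union_le (({sInf (U i)} : Set ℝ) ∪ {sSup (U i)}) (NSL i); omega
      _ ≤ 2 + 2 * (NSL i).ncard := by
          have h1 := Set.ncard_union_le ({sInf (U i)} : Set ℝ) {sSup (U i)}
          simp only [Set.ncard_singleton] at h1
          omega
  -- total number of charged gaps is at most the number of functions
  have hsum : ∑ i ∈ F, (NSL i).ncard ≤ F.card := by
    set Γ : Finset (ι × ℝ) :=
      F.biUnion (fun i => ((hNSLfin i).toFinset.image (fun x => (i, x)))) with hΓdef
    have hmemΓ : ∀ p : ι × ℝ, p ∈ Γ ↔ p.1 ∈ F ∧ p.2 ∈ NSL p.1 := by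
      rintro ⟨i, x⟩
      simp only [hΓdef, Finset.mem_biUnion, Finset.mem_image, Set.Finite.mem_toFinset]
      constructor
      · rintro ⟨j, hj, y, hy, heq⟩
        rw [Prod.ext_iff] at heq
        obtain ⟨h1, h2⟩ := heq
        simp only at h1 h2
        subst h1; subst h2
        exact ⟨hj, hy⟩
      · rintro ⟨hi, hx⟩
        exact ⟨i, hi, x, hx, rfl⟩
    have hcardΓ : Γ.card = ∑ i ∈ F, (NSL i).ncard := by
      rw [hΓdef, Finset.card_biUnion]
      · apply Finset.sum_congr rfl
        intro i hi
        rw [Finset.card_image_of_injective _ (fun a b hab => by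
          simpa using congrArg Prod.snd hab)]
        rw [Set.ncard_eq_toFinset_card _ (hNSLfin i)]
      · intro a ha b hb hab
        rw [Function.onFun, Finset.disjoint_left]
        rintro ⟨i, x⟩ h1 h2
        simp only [Finset.mem_image, Set.Finite.mem_toFinset] at h1 h2
        obtain ⟨y, hy, hy2⟩ := h1
        obtain ⟨z, hz, hz2⟩ := h2
        rw [Prod.ext_iff] at hy2 hz2
        simp only at hy2 hz2
        exact hab (hy2.1.trans hz2.1.symm)
    -- map each gap to its chosen birth, injectively
    have himg : (Γ.image (fun p => ev p.1 p.2)).card = Γ.card := by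
      apply Finset.card_image_of_injOn
      intro p hp p' hp' hpe
      obtain ⟨hp1, hp2⟩ := (hmemΓ p).1 hp
      obtain ⟨hp1', hp2'⟩ := (hmemΓ p').1 hp'
      obtain ⟨h1, h2⟩ := hinj p.1 hp1 p.2 hp2 p'.1 hp1' p'.2 hp2' hpe
      exact Prod.ext h1 h2
    have hsubim : Γ.image (fun p => ev p.1 p.2) ⊆ F.image L := by
      intro b hb
      obtain ⟨p, hp, rfl⟩ := Finset.mem_image.1 hb
      obtain ⟨hp1, hp2⟩ := (hmemΓ p).1 hp
      obtain ⟨⟨k, hk, hkL⟩, _⟩ := hev_mem p.1 hp1 p.2 hp2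
      exact Finset.mem_image.2 ⟨k, hk, hkL⟩
    calc ∑ i ∈ F, (NSL i).ncard = Γ.card := hcardΓ.symm
      _ = (Γ.image (fun p => ev p.1 p.2)).card := himg.symm
      _ ≤ (F.image L).card := Finset.card_le_card hsubim
      _ ≤ F.card := Finset.card_image_le
  -- assemble
  refine ⟨hfin, ?_⟩
  calc (Sray F L q f).ncard ≤ (⋃ i ∈ F, T i).ncard :=
        Set.ncard_le_ncard hcover (Set.Finite.biUnion F.finite_toSet (fun i _ => hTfin i))
    _ ≤ ∑ i ∈ F, (T i).ncard := ncard_biUnion_le' F T (fun i _ => hTfin i)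
    _ ≤ ∑ i ∈ F, (2 + 2 * (NSL i).ncard) := Finset.sum_le_sum hTcount
    _ = 2 * F.card + 2 * ∑ i ∈ F, (NSL i).ncard := by
        rw [Finset.sum_add_distrib, Finset.sum_const, Finset.mul_sum]
        ring_nf
    _ ≤ 4 * F.card := by omega




end LEnvRays

namespace LeftAnchored

open LEnvRays

variable {ι : Type*}

/-- domain of the `i`-th left-anchored function: `[p, R i]`. -/
def Dl (R : ι → ℝ) (p : ℝ) (i : ι) : Set ℝ := Icc p (R i)

def MsetL (F : Finset ι) (p : ℝ) (R : ι → ℝ) (f : ι → ℝ → ℝ) (i : ι) : Set ℝ :=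
  {x | x ∈ Dl R p i ∧ ∀ k ∈ F, x ∈ Dl R p k → f i x ≤ f k x}

def SrayL (F : Finset ι) (p : ℝ) (R : ι → ℝ) (f : ι → ℝ → ℝ) : Set ℝ :=
  {x | ∃ i ∈ F, ∃ j ∈ F, i ≠ j ∧ x ∈ MsetL F p R f i ∧ x ∈ MsetL F p R f j}

theorem srayL_card [DecidableEq ι] (F : Finset ι) (p : ℝ) (R : ι → ℝ) (f : ι → ℝ → ℝ)
    (hcont : ∀ i ∈ F, ContinuousOn (f i) (Dl R p i))
    (hpair : ∀ i ∈ F, ∀ j ∈ F, i ≠ j →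
      {x | x ∈ Dl R p i ∩ Dl R p j ∧ f i x = f j x}.Subsingleton) :
    (SrayL F p R f).Finite ∧ (SrayL F p R f).ncard ≤ 4 * F.card := by
  classical
  set g : ι → ℝ → ℝ := fun i x => f i (-x) with hgdef
  set L' : ι → ℝ := fun i => -R i with hL'def
  have hDm : ∀ i y, y ∈ Dm L' (-p) i ↔ -y ∈ Dl R p i := by
    intro i y
    simp only [Dm, Dl, Set.mem_Icc, hL'def]
    constructor <;> (rintro ⟨h1, h2⟩; constructor <;> linarith)
  have hMset : ∀ i x, x ∈ MsetL F p R f i ↔ -x ∈ Mset F L' (-p) g i := by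
    intro i x
    simp only [MsetL, Mset, Set.mem_setOf_eq, hDm, neg_neg, hgdef]
  have hset : SrayL F p R f = (fun y => -y) '' Sray F L' (-p) g := by
    ext x
    constructor
    · rintro ⟨i, hi, j, hj, hij, h1, h2⟩
      exact ⟨-x, ⟨i, hi, j, hj, hij, (hMset i x).1 h1, (hMset j x).1 h2⟩, neg_neg x⟩
    · rintro ⟨y, ⟨i, hi, j, hj, hij, h1, h2⟩, rfl⟩
      refine ⟨i, hi, j, hj, hij, ?_, ?_⟩
      · rw [hMset i (-y), neg_neg]; exact h1
      · rw [hMset j (-y), neg_neg]; exact h2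
  have hcont' : ∀ i ∈ F, ContinuousOn (g i) (Dm L' (-p) i) := by
    intro i hi
    apply (hcont i hi).comp continuous_neg.continuousOn
    intro y hy
    exact (hDm i y).1 hy
  have hpair' : ∀ i ∈ F, ∀ j ∈ F, i ≠ j →
      {x | x ∈ Dm L' (-p) i ∩ Dm L' (-p) j ∧ g i x = g j x}.Subsingleton := by
    intro i hi j hj hij y hy z hz
    have h1 : -y ∈ {x | x ∈ Dl R p i ∩ Dl R p j ∧ f i x = f j x} :=
      ⟨⟨(hDm i y).1 hy.1.1, (hDm j y).1 hy.1.2⟩, hy.2⟩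
    have h2 : -z ∈ {x | x ∈ Dl R p i ∩ Dl R p j ∧ f i x = f j x} :=
      ⟨⟨(hDm i z).1 hz.1.1, (hDm j z).1 hz.1.2⟩, hz.2⟩
    have := hpair i hi j hj hij h1 h2
    linarith [neg_inj.1 this]
  obtain ⟨hfin, hcard⟩ := sray_card F L' (-p) g hcont' hpair'
  constructor
  · rw [hset]; exact hfin.image _
  · rw [hset, Set.ncard_image_of_injective _ neg_injective]
    exact hcard

end LeftAnchored

namespace Window

open LEnvRays LeftAnchored LEnvAux LEnvAux2

variable {ι : Type*}

/-- breakpoints of the lower envelope inside the window `[p,q]`. -/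
def Swin (F : Finset ι) (A B : ι → ℝ) (f : ι → ℝ → ℝ) (p q : ℝ) : Set ℝ :=
  {x | x ∈ Icc p q ∧ ∃ i ∈ F, ∃ j ∈ F, i ≠ j ∧ x ∈ Icc (A i) (B i) ∧ x ∈ Icc (A j) (B j) ∧
    f i x = f j x ∧ ∀ k ∈ F, x ∈ Icc (A k) (B k) → f i x ≤ f k x}

theorem swin_card [DecidableEq ι] (F : Finset ι) (A B : ι → ℝ) (f : ι → ℝ → ℝ) (p q : ℝ)
    (hpq : p ≤ q)
    (hcl : ∀ i ∈ F, q ≤ B i ∨ A i ≤ p)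
    (hcont : ∀ i ∈ F, ContinuousOn (f i) (Icc (A i) (B i)))
    (hpair : ∀ i ∈ F, ∀ j ∈ F, i ≠ j →
      {x | x ∈ Icc (A i) (B i) ∩ Icc (A j) (B j) ∧ f i x = f j x}.Subsingleton) :
    (Swin F A B f p q).Finite ∧ (Swin F A B f p q).ncard ≤ 16 * F.card + 5 := by
  classical
  set Rcl : Finset ι := F.filter (fun i => q ≤ B i) with hRdef
  set Lcl : Finset ι := F.filter (fun i => ¬ q ≤ B i) with hLdef
  have hRF : ∀ i ∈ Rcl, i ∈ F := fun i hi => (Finset.mem_filter.1 hi).1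
  have hLF : ∀ i ∈ Lcl, i ∈ F := fun i hi => (Finset.mem_filter.1 hi).1
  have hRB : ∀ i ∈ Rcl, q ≤ B i := fun i hi => (Finset.mem_filter.1 hi).2
  have hLB : ∀ i ∈ Lcl, ¬ q ≤ B i := fun i hi => (Finset.mem_filter.1 hi).2
  have hLA : ∀ i ∈ Lcl, A i ≤ p := by
    intro i hi
    rcases hcl i (hLF i hi) with h | h
    · exact absurd h (hLB i hi)
    · exact h
  have hRLne : ∀ i ∈ Rcl, ∀ j ∈ Lcl, i ≠ j := by
    rintro i hi j hj rfl
    exact hLB i hj (hRB i hi)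
  have hcards : Rcl.card + Lcl.card = F.card :=
    Finset.card_filter_add_card_filter_not _
  -- ray data (right-anchored functions)
  set Lr : ι → ℝ := fun i => max (A i) p with hLrdef
  have hDrsub : ∀ i ∈ Rcl, Dm Lr q i ⊆ Icc (A i) (B i) := by
    intro i hi z hz
    exact ⟨(le_max_left _ _).trans hz.1, hz.2.trans (hRB i hi)⟩
  have hDrIff : ∀ x ∈ Icc p q, ∀ i ∈ Rcl, (x ∈ Dm Lr q i ↔ x ∈ Icc (A i) (B i)) := by
    intro x hx i hi
    constructor
    · exact fun h => hDrsub i hi h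
    · exact fun h => ⟨max_le h.1 hx.1, hx.2⟩
  -- left-anchored data
  set Rl : ι → ℝ := fun i => min (B i) q with hRldef
  have hDlsub : ∀ i ∈ Lcl, Dl Rl p i ⊆ Icc (A i) (B i) := by
    intro i hi z hz
    exact ⟨(hLA i hi).trans hz.1, hz.2.trans (min_le_left _ _)⟩
  have hDlIff : ∀ x ∈ Icc p q, ∀ i ∈ Lcl, (x ∈ Dl Rl p i ↔ x ∈ Icc (A i) (B i)) := by
    intro x hx i hi
    constructor
    · exact fun h => hDlsub i hi h
    · exact fun h => ⟨hx.1, le_min h.2 hx.2⟩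
  -- the two one-sided envelopes
  obtain ⟨hfinR, hcardR⟩ := sray_card Rcl Lr q f
    (fun i hi => (hcont i (hRF i hi)).mono (hDrsub i hi))
    (fun i hi j hj hij x hx y hy => hpair i (hRF i hi) j (hRF j hj) hij
      ⟨⟨hDrsub i hi hx.1.1, hDrsub j hj hx.1.2⟩, hx.2⟩
      ⟨⟨hDrsub i hi hy.1.1, hDrsub j hj hy.1.2⟩, hy.2⟩)
  obtain ⟨hfinL, hcardL⟩ := srayL_card Lcl p Rl f
    (fun i hi => (hcont i (hLF i hi)).mono (hDlsub i hi))
    (fun i hi j hj hij x hx y hy => hpair i (hLF i hi) j (hLF j hj) hij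
      ⟨⟨hDlsub i hi hx.1.1, hDlsub j hj hx.1.2⟩, hx.2⟩
      ⟨⟨hDlsub i hi hy.1.1, hDlsub j hj hy.1.2⟩, hy.2⟩)
  set SR := Sray Rcl Lr q f with hSRdef
  set SL := SrayL Lcl p Rl f with hSLdef
  -- crossing points of the two one-sided envelopes
  set Meet : Set ℝ := {x | x ∈ Icc p q ∧ ∃ i ∈ Rcl, ∃ j ∈ Lcl,
    x ∈ Mset Rcl Lr q f i ∧ x ∈ MsetL Lcl p Rl f j ∧ f i x = f j x} with hMeetdef
  have hMeetfin : Meet.Finite := by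
    have hsub : Meet ⊆ ⋃ i ∈ Rcl, ⋃ j ∈ Lcl,
        {x | x ∈ Icc (A i) (B i) ∩ Icc (A j) (B j) ∧ f i x = f j x} := by
      rintro x ⟨hxpq, i, hi, j, hj, hMi, hMj, he⟩
      exact Set.mem_biUnion hi (Set.mem_biUnion hj
        ⟨⟨hDrsub i hi hMi.1, hDlsub j hj hMj.1⟩, he⟩)
    refine Set.Finite.subset ?_ hsub
    refine Set.Finite.biUnion Rcl.finite_toSet (fun i hi => ?_)
    refine Set.Finite.biUnion Lcl.finite_toSet (fun j hj => ?_)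
    exact Set.Subsingleton.finite
      (hpair i (hRF i hi) j (hLF j hj) (hRLne i hi j hj))
  -- endpoint cuts
  set EP : Set ℝ := ({p, q} : Set ℝ) ∪ (((A '' ↑F) ∪ (B '' ↑F)) ∩ Icc p q) with hEPdef
  have hEPfin : EP.Finite := by
    apply Set.Finite.union
    · exact (Set.finite_singleton q).insert p
    · exact ((F.finite_toSet.image A).union (F.finite_toSet.image B)).inter_of_left _
  have hEPcard : EP.ncard ≤ 2 + (F.card + F.card) := by
    calc EP.ncard ≤ ({p, q} : Set ℝ).ncard + (((A '' ↑F) ∪ (B '' ↑F)) ∩ Icc p q).ncard :=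
          Set.ncard_union_le _ _
      _ ≤ 2 + (F.card + F.card) := by
          have h1 : ({p, q} : Set ℝ).ncard ≤ 2 := by
            apply (Set.ncard_insert_le _ _).trans
            simp [Set.ncard_singleton]
          have h2 : (((A '' ↑F) ∪ (B '' ↑F)) ∩ Icc p q).ncard ≤ F.card + F.card := by
            calc (((A '' ↑F) ∪ (B '' ↑F)) ∩ Icc p q).ncard
                ≤ ((A '' ↑F) ∪ (B '' ↑F)).ncard :=
                  Set.ncard_le_ncard Set.inter_subset_left
                    ((F.finite_toSet.image A).union (F.finite_toSet.image B))
              _ ≤ (A '' ↑F).ncard + (B '' ↑F).ncard := Set.ncard_union_le _ _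
              _ ≤ F.card + F.card := by
                  have hA := Set.ncard_image_le (s := (↑F : Set ι)) (f := A) F.finite_toSet
                  have hB := Set.ncard_image_le (s := (↑F : Set ι)) (f := B) F.finite_toSet
                  rw [Set.ncard_coe_finset] at hA hB
                  omega
          omega
  set CUT : Set ℝ := SR ∪ SL ∪ EP with hCUTdef
  have hCUTfin : CUT.Finite := (hfinR.union hfinL).union hEPfin
  have hCUTcard : CUT.ncard ≤ 6 * F.card + 2 := by
    calc CUT.ncard ≤ (SR ∪ SL).ncard + EP.ncard := Set.ncard_union_le _ _
      _ ≤ SR.ncard + SL.ncard + EP.ncard := by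
          have := Set.ncard_union_le SR SL; omega
      _ ≤ 6 * F.card + 2 := by omega
  -- every breakpoint in the window is on one of the three special sets
  have hcover : Swin F A B f p q ⊆ SR ∪ SL ∪ Meet := by
    rintro x ⟨hxpq, i, hi, j, hj, hij, hdi, hdj, hfe, hmin⟩
    -- helpers building Mset / MsetL memberships
    have mkR : ∀ k ∈ Rcl, x ∈ Icc (A k) (B k) →
        (∀ k' ∈ F, x ∈ Icc (A k') (B k') → f k x ≤ f k' x) → x ∈ Mset Rcl Lr q f k := by
      intro k hk hdk hmk
      exact ⟨(hDrIff x hxpq k hk).2 hdk,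
        fun k' hk' hd' => hmk k' (hRF k' hk') ((hDrIff x hxpq k' hk').1 hd')⟩
    have mkL : ∀ k ∈ Lcl, x ∈ Icc (A k) (B k) →
        (∀ k' ∈ F, x ∈ Icc (A k') (B k') → f k x ≤ f k' x) → x ∈ MsetL Lcl p Rl f k := by
      intro k hk hdk hmk
      exact ⟨(hDlIff x hxpq k hk).2 hdk,
        fun k' hk' hd' => hmk k' (hLF k' hk') ((hDlIff x hxpq k' hk').1 hd')⟩
    have hminj : ∀ k' ∈ F, x ∈ Icc (A k') (B k') → f j x ≤ f k' x := by
      intro k' hk' hd'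
      rw [← hfe]
      exact hmin k' hk' hd'
    by_cases hiR : q ≤ B i
    · have hiR' : i ∈ Rcl := Finset.mem_filter.2 ⟨hi, hiR⟩
      by_cases hjR : q ≤ B j
      · have hjR' : j ∈ Rcl := Finset.mem_filter.2 ⟨hj, hjR⟩
        exact Or.inl (Or.inl ⟨i, hiR', j, hjR', hij,
          mkR i hiR' hdi hmin, mkR j hjR' hdj hminj⟩)
      · have hjL' : j ∈ Lcl := Finset.mem_filter.2 ⟨hj, hjR⟩
        exact Or.inr ⟨hxpq, i, hiR', j, hjL',
          mkR i hiR' hdi hmin, mkL j hjL' hdj hminj, hfe⟩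
    · have hiL' : i ∈ Lcl := Finset.mem_filter.2 ⟨hi, hiR⟩
      by_cases hjR : q ≤ B j
      · have hjR' : j ∈ Rcl := Finset.mem_filter.2 ⟨hj, hjR⟩
        exact Or.inr ⟨hxpq, j, hjR', i, hiL',
          mkR j hjR' hdj hminj, mkL i hiL' hdi hmin, hfe.symm⟩
      · have hjL' : j ∈ Lcl := Finset.mem_filter.2 ⟨hj, hjR⟩
        exact Or.inl (Or.inr ⟨i, hiL', j, hjL', hij,
          mkL i hiL' hdi hmin, mkL j hjL' hdj hminj⟩)
  -- between two meets outside the cuts there is a cut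
  have hsep : ∀ x ∈ Meet \ CUT, ∀ y ∈ Meet \ CUT, x < y → (CUT ∩ Ioo x y).Nonempty := by
    intro x hx y hy hxy
    by_contra hno
    rw [Set.not_nonempty_iff_eq_empty] at hno
    obtain ⟨⟨hxpq, i₁, hi₁, j₁, hj₁, hxMi, hxMj, hxe⟩, hxC⟩ := hx
    obtain ⟨⟨hypq, i₂, hi₂, j₂, hj₂, hyMi, hyMj, hye⟩, hyC⟩ := hy
    have hnoIoo : ∀ z, z ∈ CUT → z ∉ Ioo x y := by
      intro z hz hzI
      exact absurd (Set.mem_inter hz hzI) (hno ▸ Set.notMem_empty z)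
    -- domain constancy on [x,y]
    have hconstR : ∀ k ∈ Rcl, ∀ z ∈ Icc x y, z ∈ Dm Lr q k → x ∈ Dm Lr q k := by
      intro k hk z hz hzD
      refine ⟨max_le ?_ hxpq.1, hxpq.2⟩
      by_contra hAk
      push_neg at hAk
      have hAz : A k ≤ z := (le_max_left _ _).trans hzD.1
      have hAEP : A k ∈ EP := by
        refine Or.inr ⟨Or.inl (Set.mem_image_of_mem A (hRF k hk)), ?_⟩
        exact ⟨hxpq.1.trans hAk.le, hAz.trans (hz.2.trans hypq.2)⟩
      rcases lt_or_eq_of_le (hAz.trans hz.2) with h | h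
      · exact hnoIoo (A k) (Or.inr hAEP) ⟨hAk, h⟩
      · exact hyC (Or.inr (h ▸ hAEP))
    have hextR : ∀ k, x ∈ Dm Lr q k → Icc x y ⊆ Dm Lr q k :=
      fun k hxD z hz => ⟨hxD.1.trans hz.1, hz.2.trans hypq.2⟩
    have hconstL : ∀ k ∈ Lcl, ∀ z ∈ Icc x y, z ∈ Dl Rl p k → y ∈ Dl Rl p k := by
      intro k hk z hz hzD
      refine ⟨hypq.1, le_min ?_ hypq.2⟩
      by_contra hBk
      push_neg at hBk
      have hBz : z ≤ B k := hzD.2.trans (min_le_left _ _)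
      have hBEP : B k ∈ EP := by
        refine Or.inr ⟨Or.inr (Set.mem_image_of_mem B (hLF k hk)), ?_⟩
        exact ⟨hxpq.1.trans (hz.1.trans hBz), hBk.le.trans hypq.2⟩
      rcases lt_or_eq_of_le (hz.1.trans hBz) with h | h
      · exact hnoIoo (B k) (Or.inr hBEP) ⟨h, hBk⟩
      · exact hxC (Or.inr (h ▸ hBEP))
    have hextL : ∀ k, y ∈ Dl Rl p k → Icc x y ⊆ Dl Rl p k :=
      fun k hyD z hz => ⟨hxpq.1.trans hz.1, hz.2.trans hyD.2⟩
    -- right-anchored winner persists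
    set G : Finset ι := Rcl.filter (fun k => x ∈ Dm Lr q k) with hGdef
    have hGR : ∀ k ∈ G, k ∈ Rcl := fun k hk => (Finset.mem_filter.1 hk).1
    have hGD : ∀ k ∈ G, x ∈ Dm Lr q k := fun k hk => (Finset.mem_filter.1 hk).2
    have hGmem : ∀ k ∈ Rcl, ∀ z ∈ Icc x y, z ∈ Dm Lr q k → k ∈ G :=
      fun k hk z hz hzD => Finset.mem_filter.2 ⟨hk, hconstR k hk z hz hzD⟩
    have hi₁G : i₁ ∈ G := Finset.mem_filter.2 ⟨hi₁, hxMi.1⟩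
    have hymin : ∀ k ∈ G, f i₁ y ≤ f k y := by
      apply stay_min G f x y hxy.le
        (fun k hk => ((hcont k (hRF k (hGR k hk))).mono (hDrsub k (hGR k hk))).mono
          (hextR k (hGD k hk)))
        i₁ hi₁G (fun k hk => hxMi.2 k (hGR k hk) (hGD k hk))
      intro z hz k hk hkne hzeq hzmin
      have hzM1 : z ∈ Mset Rcl Lr q f i₁ := by
        refine ⟨hextR i₁ hxMi.1 ⟨hz.1, hz.2.le⟩, ?_⟩
        intro k' hk' hd'
        exact hzmin k' (hGmem k' hk' z ⟨hz.1, hz.2.le⟩ hd')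
      have hzM2 : z ∈ Mset Rcl Lr q f k := by
        refine ⟨hextR k (hGD k hk) ⟨hz.1, hz.2.le⟩, ?_⟩
        intro k' hk' hd'
        rw [← hzeq]
        exact hzmin k' (hGmem k' hk' z ⟨hz.1, hz.2.le⟩ hd')
      have hzSR : z ∈ CUT := Or.inl (Or.inl ⟨i₁, hi₁, k, hGR k hk, hkne.symm, hzM1, hzM2⟩)
      rcases lt_or_eq_of_le hz.1 with h | h
      · exact hnoIoo z hzSR ⟨h, hz.2⟩
      · exact hxC (h ▸ hzSR)
    have hyM1 : y ∈ Mset Rcl Lr q f i₁ := by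
      refine ⟨hextR i₁ hxMi.1 (right_mem_Icc.2 hxy.le), ?_⟩
      intro k' hk' hd'
      exact hymin k' (hGmem k' hk' y (right_mem_Icc.2 hxy.le) hd')
    have hi12 : i₁ = i₂ := by
      by_contra hne
      exact hyC (Or.inl (Or.inl ⟨i₁, hi₁, i₂, hi₂, hne, hyM1, hyMi⟩))
    -- left-anchored winner persists
    set G' : Finset ι := Lcl.filter (fun k => x ∈ Dl Rl p k) with hG'def
    have hG'L : ∀ k ∈ G', k ∈ Lcl := fun k hk => (Finset.mem_filter.1 hk).1
    have hG'D : ∀ k ∈ G', x ∈ Dl Rl p k := fun k hk => (Finset.mem_filter.1 hk).2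
    have hG'ext : ∀ k ∈ G', Icc x y ⊆ Dl Rl p k :=
      fun k hk => hextL k (hconstL k (hG'L k hk) x (left_mem_Icc.2 hxy.le) (hG'D k hk))
    have hG'mem : ∀ k ∈ Lcl, ∀ z ∈ Icc x y, z ∈ Dl Rl p k → k ∈ G' := by
      intro k hk z hz hzD
      refine Finset.mem_filter.2 ⟨hk, ?_⟩
      exact hextL k (hconstL k hk z hz hzD) (left_mem_Icc.2 hxy.le)
    have hj₁G : j₁ ∈ G' := Finset.mem_filter.2 ⟨hj₁, hxMj.1⟩
    have hymin' : ∀ k ∈ G', f j₁ y ≤ f k y := by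
      apply stay_min G' f x y hxy.le
        (fun k hk => ((hcont k (hLF k (hG'L k hk))).mono (hDlsub k (hG'L k hk))).mono
          (hG'ext k hk))
        j₁ hj₁G (fun k hk => hxMj.2 k (hG'L k hk) (hG'D k hk))
      intro z hz k hk hkne hzeq hzmin
      have hzM1 : z ∈ MsetL Lcl p Rl f j₁ := by
        refine ⟨hG'ext j₁ hj₁G ⟨hz.1, hz.2.le⟩, ?_⟩
        intro k' hk' hd'
        exact hzmin k' (hG'mem k' hk' z ⟨hz.1, hz.2.le⟩ hd')
      have hzM2 : z ∈ MsetL Lcl p Rl f k := by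
        refine ⟨hG'ext k hk ⟨hz.1, hz.2.le⟩, ?_⟩
        intro k' hk' hd'
        rw [← hzeq]
        exact hzmin k' (hG'mem k' hk' z ⟨hz.1, hz.2.le⟩ hd')
      have hzSL : z ∈ CUT := Or.inl (Or.inr ⟨j₁, hj₁, k, hG'L k hk, hkne.symm, hzM1, hzM2⟩)
      rcases lt_or_eq_of_le hz.1 with h | h
      · exact hnoIoo z hzSL ⟨h, hz.2⟩
      · exact hxC (h ▸ hzSL)
    have hyM1' : y ∈ MsetL Lcl p Rl f j₁ := by
      refine ⟨hG'ext j₁ hj₁G (right_mem_Icc.2 hxy.le), ?_⟩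
      intro k' hk' hd'
      exact hymin' k' (hG'mem k' hk' y (right_mem_Icc.2 hxy.le) hd')
    have hj12 : j₁ = j₂ := by
      by_contra hne
      exact hyC (Or.inl (Or.inr ⟨j₁, hj₁, j₂, hj₂, hne, hyM1', hyMj⟩))
    -- the pair (i₁, j₁) meets at both x and y : contradiction
    have hxeq : x = y := by
      apply hpair i₁ (hRF i₁ hi₁) j₁ (hLF j₁ hj₁) (hRLne i₁ hi₁ j₁ hj₁)
      · exact ⟨⟨hDrsub i₁ hi₁ hxMi.1, hDlsub j₁ hj₁ hxMj.1⟩, hxe⟩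
      · refine ⟨⟨hDrsub i₁ hi₁ hyM1.1, hDlsub j₁ hj₁ hyM1'.1⟩, ?_⟩
        rw [hi12, hj12]
        exact hye
    exact absurd hxeq (ne_of_lt hxy)
  -- counting the meets
  have hMeetCard : Meet.ncard ≤ 2 * CUT.ncard + 1 := by
    have h1 : (Meet \ CUT).ncard ≤ CUT.ncard + 1 :=
      sep_count _ _ hMeetfin.diff hCUTfin hsep
    have h2 : Meet ⊆ (Meet ∩ CUT) ∪ (Meet \ CUT) := by
      intro z hz
      by_cases h : z ∈ CUT
      · exact Or.inl ⟨hz, h⟩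
      · exact Or.inr ⟨hz, h⟩
    calc Meet.ncard ≤ ((Meet ∩ CUT) ∪ (Meet \ CUT)).ncard :=
          Set.ncard_le_ncard h2 ((hMeetfin.inter_of_left _).union hMeetfin.diff)
      _ ≤ (Meet ∩ CUT).ncard + (Meet \ CUT).ncard := Set.ncard_union_le _ _
      _ ≤ CUT.ncard + (CUT.ncard + 1) := by
          have := Set.ncard_le_ncard (Set.inter_subset_right (s := Meet) (t := CUT)) hCUTfin
          omega
      _ = 2 * CUT.ncard + 1 := by ring
  -- final count
  have hfin : (Swin F A B f p q).Finite :=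
    Set.Finite.subset ((hfinR.union hfinL).union hMeetfin) hcover
  refine ⟨hfin, ?_⟩
  calc (Swin F A B f p q).ncard ≤ (SR ∪ SL ∪ Meet).ncard :=
        Set.ncard_le_ncard hcover ((hfinR.union hfinL).union hMeetfin)
    _ ≤ (SR ∪ SL).ncard + Meet.ncard := Set.ncard_union_le _ _
    _ ≤ SR.ncard + SL.ncard + Meet.ncard := by
        have := Set.ncard_union_le SR SL; omega
    _ ≤ 16 * F.card + 5 := by omega

end Window

open MeasureTheory

open scoped Classical in
theorem lower_envelope_linear_breakpoints (c : ℝ) (hc : 0 < c) :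
    ∃ K : ℝ, ∀ (n : ℕ) (d : ℝ), 0 < d → ∀ (a : Fin n → ℝ) (f : Fin n → ℝ → ℝ),
      (∀ i, ContinuousOn (f i) (Set.Icc (a i) (a i + d))) →
      (∀ i j : Fin n, i ≠ j →
        {x | x ∈ Set.Icc (a i) (a i + d) ∩ Set.Icc (a j) (a j + d) ∧
          f i x = f j x}.Subsingleton) →
      (volume (⋃ i, Set.Icc (a i) (a i + d))).toReal = c * d →
      ({x : ℝ | ∃ i : Fin n, x = a i ∨ x = a i + d} ∪
        {x : ℝ | ∃ i j : Fin n, i ≠ j ∧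
          x ∈ Set.Icc (a i) (a i + d) ∩ Set.Icc (a j) (a j + d) ∧
          f i x = f j x ∧
          ∀ k : Fin n, x ∈ Set.Icc (a k) (a k + d) → f i x ≤ f k x}).ncard ≤ K * n := by
  refine ⟨86, ?_⟩
  intro n d hd a f hcont hpair _hmeas
  set E : Set ℝ := {x : ℝ | ∃ i : Fin n, x = a i ∨ x = a i + d} with hEdef
  set S : Set ℝ := {x : ℝ | ∃ i j : Fin n, i ≠ j ∧
      x ∈ Set.Icc (a i) (a i + d) ∩ Set.Icc (a j) (a j + d) ∧
      f i x = f j x ∧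
      ∀ k : Fin n, x ∈ Set.Icc (a k) (a k + d) → f i x ≤ f k x} with hSdef
  -- endpoints
  have hEsub : E ⊆ Set.range a ∪ Set.range (fun i => a i + d) := by
    rintro x ⟨i, h | h⟩
    · exact Or.inl ⟨i, h.symm⟩
    · exact Or.inr ⟨i, h.symm⟩
  have hEfin : E.Finite := ((Set.finite_range a).union (Set.finite_range _)).subset hEsub
  have hEcard : E.ncard ≤ 2 * n := by
    have h1 : (Set.range a).ncard ≤ n := by
      rw [← Set.image_univ]
      calc (a '' Set.univ).ncard ≤ (Set.univ : Set (Fin n)).ncard :=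
            Set.ncard_image_le Set.finite_univ
        _ = n := by rw [Set.ncard_univ]; simp
    have h2 : (Set.range (fun i => a i + d)).ncard ≤ n := by
      rw [← Set.image_univ]
      calc ((fun i => a i + d) '' Set.univ).ncard ≤ (Set.univ : Set (Fin n)).ncard :=
            Set.ncard_image_le Set.finite_univ
        _ = n := by rw [Set.ncard_univ]; simp
    calc E.ncard ≤ (Set.range a ∪ Set.range (fun i => a i + d)).ncard :=
          Set.ncard_le_ncard hEsub ((Set.finite_range a).union (Set.finite_range _))
      _ ≤ (Set.range a).ncard + (Set.range (fun i => a i + d)).ncard :=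
          Set.ncard_union_le _ _
      _ ≤ 2 * n := by omega
  -- windows
  set half : ℝ := d / 2 with hhalf
  have hhalfpos : 0 < half := by positivity
  set Fk : ℤ → Finset (Fin n) := fun k =>
    Finset.univ.filter (fun i => a i ≤ k * half + half ∧ k * half ≤ a i + d) with hFkdef
  set SW : ℤ → Set ℝ := fun k =>
    Window.Swin (Fk k) a (fun i => a i + d) f (k * half) (k * half + half) with hSWdef
  have hwin : ∀ k : ℤ, (SW k).Finite ∧ (SW k).ncard ≤ 16 * (Fk k).card + 5 := by
    intro k
    apply Window.swin_card
    · linarith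
    · intro i hi
      by_contra hcon
      push_neg at hcon
      obtain ⟨h1, h2⟩ := hcon
      have hdd : d < half := by linarith
      rw [hhalf] at hdd; linarith
    · exact fun i _ => hcont i
    · exact fun i _ j _ hij => hpair i j hij
  -- candidate windows for each function
  set lo : Fin n → ℤ := fun i => ⌈a i / half⌉ - 1 with hlodef
  set hi : Fin n → ℤ := fun i => ⌊(a i + d) / half⌋ with hhidef
  have hFkW : ∀ (k : ℤ) (i : Fin n), i ∈ Fk k ↔ k ∈ Finset.Icc (lo i) (hi i) := by
    intro k i
    rw [hFkdef]
    simp only [Finset.mem_filter, Finset.mem_univ, true_and, Finset.mem_Icc, hlodef, hhidef]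
    have hceil : (⌈a i / half⌉ - 1 ≤ k) ↔ a i ≤ k * half + half := by
      rw [sub_le_iff_le_add, Int.ceil_le]
      rw [div_le_iff₀ hhalfpos]
      push_cast
      constructor <;> intro h <;> nlinarith
    have hfloor : (k ≤ ⌊(a i + d) / half⌋) ↔ k * half ≤ a i + d := by
      rw [Int.le_floor, le_div_iff₀ hhalfpos]
    rw [hceil, hfloor]
  have hWcard : ∀ i : Fin n, (Finset.Icc (lo i) (hi i)).card ≤ 4 := by
    intro i
    have hlo2 : lo i = ⌈a i / half⌉ - 1 := rfl
    have hhi2 : hi i = ⌊(a i + d) / half⌋ := rfl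
    have hfe : (a i + d) / half = a i / half + ((2:ℤ):ℝ) := by
      rw [hhalf]; push_cast; field_simp
    have hfl : hi i = ⌊a i / half⌋ + 2 := by
      rw [hhi2, hfe, Int.floor_add_intCast]
    have hlc := Int.floor_le_ceil (a i / half)
    rw [Int.card_Icc]
    omega
  set KS : Finset ℤ := Finset.univ.biUnion (fun i : Fin n => Finset.Icc (lo i) (hi i))
    with hKSdef
  have hScover : S ⊆ ⋃ k ∈ KS, SW k := by
    rintro x ⟨i, j, hij, ⟨hdi, hdj⟩, hfe, hmin⟩
    set k : ℤ := ⌊x / half⌋ with hkdef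
    have hk1 : k * half ≤ x := by
      have h := Int.floor_le (x / half)
      rw [le_div_iff₀ hhalfpos] at h
      exact h
    have hk2 : x ≤ k * half + half := by
      have h := Int.lt_floor_add_one (x / half)
      rw [div_lt_iff₀ hhalfpos] at h
      push_cast at h
      nlinarith
    have hiFk : i ∈ Fk k := by
      rw [hFkdef]
      refine Finset.mem_filter.2 ⟨Finset.mem_univ i, ⟨hdi.1.trans hk2, hk1.trans hdi.2⟩⟩
    have hjFk : j ∈ Fk k := by
      rw [hFkdef]
      refine Finset.mem_filter.2 ⟨Finset.mem_univ j, ⟨hdj.1.trans hk2, hk1.trans hdj.2⟩⟩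
    have hkKS : k ∈ KS := Finset.mem_biUnion.2 ⟨i, Finset.mem_univ i, (hFkW k i).1 hiFk⟩
    refine Set.mem_biUnion hkKS ?_
    exact ⟨⟨hk1, hk2⟩, i, hiFk, j, hjFk, hij, hdi, hdj, hfe,
      fun k' _ hd' => hmin k' hd'⟩
  have hSfin : S.Finite :=
    Set.Finite.subset (Set.Finite.biUnion KS.finite_toSet (fun k _ => (hwin k).1)) hScover
  have hsumFk : ∑ k ∈ KS, (Fk k).card ≤ 4 * n := by
    have hcardeq : ∀ k : ℤ, (Fk k).card
        = ∑ i : Fin n, if i ∈ Fk k then 1 else 0 := by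
      intro k
      rw [Finset.sum_ite_mem, Finset.univ_inter, Finset.card_eq_sum_ones]
    calc ∑ k ∈ KS, (Fk k).card = ∑ k ∈ KS, ∑ i : Fin n, if i ∈ Fk k then 1 else 0 :=
          Finset.sum_congr rfl (fun k _ => hcardeq k)
      _ = ∑ i : Fin n, ∑ k ∈ KS, if i ∈ Fk k then 1 else 0 := Finset.sum_comm
      _ ≤ ∑ i : Fin n, (4:ℕ) := by
          apply Finset.sum_le_sum
          intro i _
          have h1 : ∑ k ∈ KS, (if i ∈ Fk k then 1 else 0)
              = (KS.filter (fun k => i ∈ Fk k)).card := by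
            rw [Finset.card_eq_sum_ones, Finset.sum_filter]
          rw [h1]
          refine le_trans (Finset.card_le_card ?_) (hWcard i)
          intro k hk
          exact (hFkW k i).1 (Finset.mem_filter.1 hk).2
      _ = 4 * n := by simp [Finset.card_univ, mul_comm]
  have hScard : S.ncard ≤ 84 * n := by
    have h0 : ∀ k ∈ KS, 1 ≤ (Fk k).card := by
      intro k hk
      obtain ⟨i, _, hik⟩ := Finset.mem_biUnion.1 hk
      have : i ∈ Fk k := (hFkW k i).2 hik
      exact Finset.card_pos.2 ⟨i, this⟩
    calc S.ncard ≤ (⋃ k ∈ KS, SW k).ncard :=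
          Set.ncard_le_ncard hScover
            (Set.Finite.biUnion KS.finite_toSet (fun k _ => (hwin k).1))
      _ ≤ ∑ k ∈ KS, (SW k).ncard :=
          LEnvAux.ncard_biUnion_le KS SW (fun k _ => (hwin k).1)
      _ ≤ ∑ k ∈ KS, (16 * (Fk k).card + 5) :=
          Finset.sum_le_sum (fun k _ => (hwin k).2)
      _ ≤ ∑ k ∈ KS, 21 * (Fk k).card :=
          Finset.sum_le_sum (fun k hk => by have := h0 k hk; omega)
      _ = 21 * ∑ k ∈ KS, (Fk k).card := (Finset.mul_sum _ _ _).symm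
      _ ≤ 21 * (4 * n) := Nat.mul_le_mul_left _ hsumFk
      _ = 84 * n := by ring
  have htot : (E ∪ S).ncard ≤ 86 * n := by
    calc (E ∪ S).ncard ≤ E.ncard + S.ncard := Set.ncard_union_le _ _
      _ ≤ 86 * n := by omega
  calc ((E ∪ S).ncard : ℝ) ≤ ((86 * n : ℕ) : ℝ) := Nat.cast_le.2 htot
    _ = 86 * (n : ℝ) := by push_cast; ring
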